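/- Let A be a noetherian local ring with maximal ideal m_A that is complete with respect to its m_A-adic topology, let t ∈ m_A, and let R = A⟦X,Y⟧/(XY − t) be the quotient of the formal power series ring in two variables over A, with u, v the images of X, Y. Let l be a positive integer, and let a, b ∈ Rˣ be units such that a·u^l = u^l, b·v^l = v^l, and a·b is the image under the structure map A → R of a unit of A. Then a = b = 1. -/

import Mathlib

set_option linter.unusedSectionVars false
open MvPowerSeries Finset IsLocalRing



namespace Stmt3Aux
variable {A : Type*} [CommRing A] [IsLocalRing A]

lemma mem_smul_top_iff {n : ℕ} {x : A} :
    x ∈ ((maximalIdeal A) ^ n • ⊤ : Submodule A A) ↔ x ∈ (maximalIdeal A) ^ n := by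
  rw [smul_eq_mul, Ideal.mul_top]

/-- partial sums -/
def S (t : A) (f : ℕ → A) (n : ℕ) : A := ∑ k ∈ Finset.range n, t ^ k * f k

variable {t : A}

lemma S_compat (ht : t ∈ maximalIdeal A) (f : ℕ → A) {m n : ℕ} (h : m ≤ n) :
    S t f n - S t f m ∈ (maximalIdeal A) ^ m := by
  have e : S t f n = S t f m + ∑ k ∈ Finset.Ico m n, t ^ k * f k := by
    rw [S, S, Finset.range_eq_Ico, ← Finset.sum_Ico_consecutive _ (Nat.zero_le m) h, Finset.range_eq_Ico]
  rw [e]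
  simp only [add_sub_cancel_left]
  refine Submodule.sum_mem _ fun k hk => ?_
  have hk' : m ≤ k := (Finset.mem_Ico.mp hk).1
  have htk : t ^ k ∈ (maximalIdeal A) ^ k := Ideal.pow_mem_pow ht k
  exact Ideal.mul_mem_right _ _ (Ideal.pow_le_pow_right hk' htk)

variable [IsAdicComplete (maximalIdeal A) A]

lemma haus {x : A} (h : ∀ n, x ∈ (maximalIdeal A) ^ n) : x = 0 := by
  refine IsHausdorff.haus' (I := maximalIdeal A) x fun n => ?_
  rw [SModEq.sub_mem, sub_zero, mem_smul_top_iff]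
  exact h n

/-- the limit of the partial sums `S t f n` -/
noncomputable def nu (ht : t ∈ maximalIdeal A) (f : ℕ → A) : A :=
  Classical.choose (IsPrecomplete.prec' (I := maximalIdeal A) (S t f) (fun {m n} h => by
    rw [SModEq.sub_mem, mem_smul_top_iff, ← neg_sub]
    exact Submodule.neg_mem _ (S_compat ht f h)))

lemma nu_spec (ht : t ∈ maximalIdeal A) (f : ℕ → A) (n : ℕ) :
    S t f n - nu ht f ∈ (maximalIdeal A) ^ n := by
  have := Classical.choose_spec (IsPrecomplete.prec' (I := maximalIdeal A) (S t f) (fun {m n} h => by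
    rw [SModEq.sub_mem, mem_smul_top_iff, ← neg_sub]
    exact Submodule.neg_mem _ (S_compat ht f h))) n
  rwa [SModEq.sub_mem, mem_smul_top_iff] at this

lemma nu_eq (ht : t ∈ maximalIdeal A) {f : ℕ → A} {L : A}
    (h : ∀ n, S t f n - L ∈ (maximalIdeal A) ^ n) : nu ht f = L := by
  have : ∀ n, nu ht f - L ∈ (maximalIdeal A) ^ n := fun n => by
    have h1 := nu_spec ht f n
    have := Submodule.sub_mem _ (h n) h1
    simpa using this
  have := haus (x := nu ht f - L) this
  exact sub_eq_zero.mp this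


lemma nu_congr (ht : t ∈ maximalIdeal A) {f g : ℕ → A} (h : ∀ k, f k = g k) :
    nu ht f = nu ht g := congrArg _ (funext h)

lemma nu_sub (ht : t ∈ maximalIdeal A) (f g : ℕ → A) :
    nu ht (fun k => f k - g k) = nu ht f - nu ht g := by
  refine nu_eq ht fun n => ?_
  have e : S t (fun k => f k - g k) n - (nu ht f - nu ht g)
      = (S t f n - nu ht f) - (S t g n - nu ht g) := by
    simp only [S, mul_sub, Finset.sum_sub_distrib]
    ring
  rw [e]
  exact Submodule.sub_mem _ (nu_spec ht f n) (nu_spec ht g n)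

lemma S_shift (t : A) (f : ℕ → A) (l n : ℕ) :
    S t (fun k => if l ≤ k then f (k - l) else 0) n = t ^ l * S t f (n - l) := by
  simp only [S]
  induction n with
  | zero => simp
  | succ n ih =>
    rw [Finset.sum_range_succ, ih]
    by_cases h : l ≤ n
    · rw [if_pos h]
      have h1 : n + 1 - l = (n - l) + 1 := by omega
      rw [h1, Finset.sum_range_succ, mul_add, ← mul_assoc, ← pow_add]
      have h2 : l + (n - l) = n := by omega
      rw [h2]
    · rw [if_neg h]
      have h1 : n + 1 - l = n - l := by omega
      rw [h1, mul_zero, add_zero]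

lemma nu_shift (ht : t ∈ maximalIdeal A) (f : ℕ → A) (l : ℕ) :
    nu ht (fun k => if l ≤ k then f (k - l) else 0) = t ^ l * nu ht f := by
  refine nu_eq ht fun n => ?_
  rw [S_shift]
  have e : t ^ l * S t f (n - l) - t ^ l * nu ht f = t ^ l * (S t f (n - l) - nu ht f) := by
    ring
  rw [e]
  have h1 : t ^ l * (S t f (n - l) - nu ht f) ∈ (maximalIdeal A) ^ (l + (n - l)) := by
    rw [pow_add]
    exact Ideal.mul_mem_mul (Ideal.pow_mem_pow ht l) (nu_spec ht f (n - l))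
  exact Ideal.pow_le_pow_right (by omega) h1

lemma nu_delta (ht : t ∈ maximalIdeal A) (c : A) :
    nu ht (fun k => if k = 0 then c else 0) = c := by
  refine nu_eq ht fun n => ?_
  match n with
  | 0 => simp
  | (n+1) =>
    have e : S t (fun k => if k = 0 then c else 0) (n+1) = c := by
      simp only [S]
      induction n with
      | zero => simp
      | succ n ih => rw [Finset.sum_range_succ, ih, if_neg (by omega), mul_zero, add_zero]
    rw [e, sub_self]
    exact Submodule.zero_mem _

lemma nu_zero (ht : t ∈ maximalIdeal A) :
    nu ht (fun _ => (0 : A)) = 0 := by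
  refine nu_eq ht fun n => ?_
  simp [S]








/-- exponent finsupp -/
noncomputable def e (i j : ℕ) : Fin 2 →₀ ℕ := Finsupp.single 0 i + Finsupp.single 1 j

@[simp] lemma e_apply0 (i j : ℕ) : e i j 0 = i := by
  simp [e, Finsupp.single_apply]

@[simp] lemma e_apply1 (i j : ℕ) : e i j 1 = j := by
  simp [e, Finsupp.single_apply]

lemma eq_e (d : Fin 2 →₀ ℕ) : d = e (d 0) (d 1) := by
  ext x
  fin_cases x <;> simp

lemma e_le_e {i j i' j' : ℕ} : e i j ≤ e i' j' ↔ i ≤ i' ∧ j ≤ j' := by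
  rw [Finsupp.le_def]
  constructor
  · intro h; exact ⟨by simpa using h 0, by simpa using h 1⟩
  · intro h x
    fin_cases x
    · simpa using h.1
    · simpa using h.2

lemma e_sub_e (i j i' j' : ℕ) : e i j - e i' j' = e (i - i') (j - j') := by
  ext x
  fin_cases x <;> simp [Finsupp.tsub_apply]

lemma e_eq_zero_iff {i j : ℕ} : e i j = 0 ↔ i = 0 ∧ j = 0 := by
  constructor
  · intro h
    constructor
    · have := congrArg (fun d => d 0) h; simpa using this
    · have := congrArg (fun d => d 1) h; simpa using this
  · rintro ⟨rfl, rfl⟩; ext x; fin_cases x <;> simp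

lemma X_mul_X : (X 0 * X 1 : MvPowerSeries (Fin 2) A)
    = monomial (e 1 1) 1 := by
  rw [X, X, monomial_mul_monomial, one_mul]
  rfl

lemma Xpow (l : ℕ) (s : Fin 2) : (X s ^ l : MvPowerSeries (Fin 2) A)
    = monomial (Finsupp.single s l) 1 := X_pow_eq s l


/-- the defining element -/
noncomputable def P (t : A) : MvPowerSeries (Fin 2) A := X 0 * X 1 - C t

lemma coeff_P_mul (t : A) (q : MvPowerSeries (Fin 2) A) (i j : ℕ) :
    coeff (e i j) (P t * q)
      = (if 1 ≤ i ∧ 1 ≤ j then coeff (e (i-1) (j-1)) q else 0)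
        - t * coeff (e i j) q := by
  classical
  rw [P, sub_mul, map_sub, X_mul_X, coeff_monomial_mul, coeff_C_mul]
  simp only [e_le_e, e_sub_e, one_mul]

lemma coeff_mul_Xpow (r : MvPowerSeries (Fin 2) A) (l i j : ℕ) :
    coeff (e i j) (r * X 0 ^ l) = if l ≤ i then coeff (e (i - l) j) r else 0 := by
  classical
  rw [Xpow, coeff_mul_monomial]
  have h1 : Finsupp.single (0 : Fin 2) l ≤ e i j ↔ l ≤ i := by
    have : Finsupp.single (0 : Fin 2) l = e l 0 := by
      ext x; fin_cases x <;> simp [e, Finsupp.single_apply]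
    rw [this, e_le_e]; omega
  have h2 : e i j - Finsupp.single (0 : Fin 2) l = e (i - l) j := by
    have : Finsupp.single (0 : Fin 2) l = e l 0 := by
      ext x; fin_cases x <;> simp [e, Finsupp.single_apply]
    rw [this, e_sub_e]; simp
  simp only [h1, h2, mul_one]

lemma coeff_mul_Ypow (r : MvPowerSeries (Fin 2) A) (l i j : ℕ) :
    coeff (e i j) (r * X 1 ^ l) = if l ≤ j then coeff (e i (j - l)) r else 0 := by
  classical
  rw [Xpow, coeff_mul_monomial]
  have h1 : Finsupp.single (1 : Fin 2) l ≤ e i j ↔ l ≤ j := by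
    have : Finsupp.single (1 : Fin 2) l = e 0 l := by
      ext x; fin_cases x <;> simp [e, Finsupp.single_apply]
    rw [this, e_le_e]; omega
  have h2 : e i j - Finsupp.single (1 : Fin 2) l = e i (j - l) := by
    have : Finsupp.single (1 : Fin 2) l = e 0 l := by
      ext x; fin_cases x <;> simp [e, Finsupp.single_apply]
    rw [this, e_sub_e]; simp
  simp only [h1, h2, mul_one]

/-- pure series in Y -/
noncomputable def pureY (g : ℕ → A) : MvPowerSeries (Fin 2) A :=
  fun d => if d 0 = 0 then g (d 1) else 0

noncomputable def pureX (h : ℕ → A) : MvPowerSeries (Fin 2) A :=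
  fun d => if d 1 = 0 then h (d 0) else 0

lemma coeff_pureY (g : ℕ → A) (d : Fin 2 →₀ ℕ) :
    coeff d (pureY g) = if d 0 = 0 then g (d 1) else 0 := rfl

lemma coeff_pureX (h : ℕ → A) (d : Fin 2 →₀ ℕ) :
    coeff d (pureX h) = if d 1 = 0 then h (d 0) else 0 := rfl

lemma coeff_pureY_mul_pureX (g h : ℕ → A) (d : Fin 2 →₀ ℕ) :
    coeff d (pureY g * pureX h) = g (d 1) * h (d 0) := by
  classical
  rw [coeff_mul]
  rw [Finset.sum_eq_single (e 0 (d 1), e (d 0) 0)]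
  · rw [coeff_pureY, coeff_pureX]
    simp
  · rintro ⟨u, v⟩ hmem hne
    rw [Finset.HasAntidiagonal.mem_antidiagonal] at hmem
    rw [coeff_pureY, coeff_pureX]
    by_cases hu : u 0 = 0
    · by_cases hv : v 1 = 0
      · exfalso
        apply hne
        have h0 : u 0 + v 0 = d 0 := by rw [← Finsupp.add_apply, hmem]
        have h1 : u 1 + v 1 = d 1 := by rw [← Finsupp.add_apply, hmem]
        have hu1 : u 1 = d 1 := by omega
        have hv0 : v 0 = d 0 := by omega
        have : u = e 0 (d 1) := by
          rw [eq_e u, hu, hu1]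
        have hv' : v = e (d 0) 0 := by
          rw [eq_e v, hv, hv0]
        rw [this, hv']
      · rw [if_neg hv, mul_zero]
    · rw [if_neg hu, zero_mul]
  · intro hmem
    exfalso
    exact hmem (Finset.HasAntidiagonal.mem_antidiagonal.mpr (by ext x; fin_cases x <;> simp))


noncomputable def nuX (ht : t ∈ maximalIdeal A) (i : ℕ) (F : MvPowerSeries (Fin 2) A) : A :=
  nu ht (fun k => coeff (e (i + k) k) F)

noncomputable def nuY (ht : t ∈ maximalIdeal A) (j : ℕ) (F : MvPowerSeries (Fin 2) A) : A :=
  nu ht (fun k => coeff (e k (j + k)) F)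

lemma nuY_zero_eq (ht : t ∈ maximalIdeal A) (F : MvPowerSeries (Fin 2) A) :
    nuY ht 0 F = nuX ht 0 F := by
  simp only [nuX, nuY]
  exact nu_congr ht fun k => by rw [Nat.zero_add]

lemma S_tele_X (t : A) (q : MvPowerSeries (Fin 2) A) (i n : ℕ) :
    S t (fun k => coeff (e (i + k) k) (P t * q)) (n + 1)
      = -(t ^ (n + 1) * coeff (e (i + n) n) q) := by
  induction n with
  | zero =>
    rw [S, Finset.sum_range_one]
    rw [coeff_P_mul, if_neg (by omega)]
    ring_nf
  | succ n ih =>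
    rw [S, Finset.sum_range_succ, ← S, ih, coeff_P_mul, if_pos (by omega)]
    have e1 : i + (n + 1) - 1 = i + n := by omega
    have e2 : n + 1 - 1 = n := by omega
    rw [e1, e2]
    ring

lemma S_tele_Y (t : A) (q : MvPowerSeries (Fin 2) A) (j n : ℕ) :
    S t (fun k => coeff (e k (j + k)) (P t * q)) (n + 1)
      = -(t ^ (n + 1) * coeff (e n (j + n)) q) := by
  induction n with
  | zero =>
    rw [S, Finset.sum_range_one]
    rw [coeff_P_mul, if_neg (by omega)]
    ring_nf
  | succ n ih =>
    rw [S, Finset.sum_range_succ, ← S, ih, coeff_P_mul, if_pos (by omega)]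
    have e1 : n + 1 - 1 = n := by omega
    have e2 : j + (n + 1) - 1 = j + n := by omega
    rw [e1, e2]
    ring

lemma nuX_P (ht : t ∈ maximalIdeal A) (q : MvPowerSeries (Fin 2) A) (i : ℕ) :
    nuX ht i (P t * q) = 0 := by
  refine nu_eq ht fun n => ?_
  rw [sub_zero]
  match n with
  | 0 => simp [S]
  | (n+1) =>
    rw [S_tele_X]
    exact Submodule.neg_mem _ (Ideal.mul_mem_right _ _ (Ideal.pow_mem_pow ht _))

lemma nuY_P (ht : t ∈ maximalIdeal A) (q : MvPowerSeries (Fin 2) A) (j : ℕ) :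
    nuY ht j (P t * q) = 0 := by
  refine nu_eq ht fun n => ?_
  rw [sub_zero]
  match n with
  | 0 => simp [S]
  | (n+1) =>
    rw [S_tele_Y]
    exact Submodule.neg_mem _ (Ideal.mul_mem_right _ _ (Ideal.pow_mem_pow ht _))

lemma coeff_e_congr {a b a' b' : ℕ} (h1 : a = a') (h2 : b = b') (r : MvPowerSeries (Fin 2) A) :
    coeff (e a b) r = coeff (e a' b') r := by rw [h1, h2]

lemma extractY (ht : t ∈ maximalIdeal A) (r q₁ : MvPowerSeries (Fin 2) A) (l : ℕ)
    (hl : 1 ≤ l) (h : r * X 0 ^ l = P t * q₁) :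
    (∀ i, nuX ht i r = 0) ∧ (∀ j, t ^ j * nuY ht j r = 0) := by
  have hX : ∀ i, nuX ht i (r * X 0 ^ l) = 0 := fun i => by rw [h]; exact nuX_P ht q₁ i
  have hY : ∀ j, nuY ht j (r * X 0 ^ l) = 0 := fun j => by rw [h]; exact nuY_P ht q₁ j
  have key1 : ∀ i, nuX ht i r = 0 := by
    intro i
    have := hX (i + l)
    rw [nuX] at this
    rw [nuX, ← this]
    refine (nu_congr ht fun k => ?_).symm
    rw [coeff_mul_Xpow, if_pos (by omega)]
    exact coeff_e_congr (by omega) (by omega) r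
  refine ⟨key1, fun j => ?_⟩
  match j with
  | 0 =>
    rw [pow_zero, one_mul, nuY_zero_eq]
    exact key1 0
  | (j+1) =>
    by_cases hj : j + 1 ≤ l
    · -- use hX (l - (j+1))
      have := hX (l - (j+1))
      rw [nuX] at this
      have e1 : nu ht (fun k => coeff (e (l - (j+1) + k) k) (r * X 0 ^ l))
          = t ^ (j+1) * nuY ht (j+1) r := by
        rw [nuY]
        rw [← nu_shift ht (fun k => coeff (e k ((j+1) + k)) r) (j+1)]
        refine nu_congr ht fun k => ?_
        rw [coeff_mul_Xpow]
        by_cases hk : j + 1 ≤ k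
        · rw [if_pos (by omega), if_pos hk]
          exact coeff_e_congr (by omega) (by omega) _
        · rw [if_neg (by omega), if_neg hk]
      rw [e1] at this
      exact this
    · -- use hY (j + 1 - l)
      have := hY (j + 1 - l)
      rw [nuY] at this
      have e1 : nu ht (fun k => coeff (e k ((j + 1 - l) + k)) (r * X 0 ^ l))
          = t ^ l * nuY ht (j+1) r := by
        rw [nuY]
        rw [← nu_shift ht (fun k => coeff (e k ((j+1) + k)) r) l]
        refine nu_congr ht fun k => ?_
        rw [coeff_mul_Xpow]
        by_cases hk : l ≤ k
        · rw [if_pos hk, if_pos hk]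
          exact coeff_e_congr (by omega) (by omega) _
        · rw [if_neg hk, if_neg hk]
      rw [e1] at this
      calc t ^ (j+1) * nuY ht (j+1) r
          = t ^ (j + 1 - l) * (t ^ l * nuY ht (j+1) r) := by
            rw [← mul_assoc, ← pow_add]
            congr 2
            omega
        _ = 0 := by rw [this, mul_zero]

lemma extractX (ht : t ∈ maximalIdeal A) (s q₂ : MvPowerSeries (Fin 2) A) (l : ℕ)
    (hl : 1 ≤ l) (h : s * X 1 ^ l = P t * q₂) :
    (∀ j, nuY ht j s = 0) ∧ (∀ i, t ^ i * nuX ht i s = 0) := by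
  have hX : ∀ i, nuX ht i (s * X 1 ^ l) = 0 := fun i => by rw [h]; exact nuX_P ht q₂ i
  have hY : ∀ j, nuY ht j (s * X 1 ^ l) = 0 := fun j => by rw [h]; exact nuY_P ht q₂ j
  have key1 : ∀ j, nuY ht j s = 0 := by
    intro j
    have := hY (j + l)
    rw [nuY] at this
    rw [nuY, ← this]
    refine (nu_congr ht fun k => ?_).symm
    rw [coeff_mul_Ypow, if_pos (by omega)]
    exact coeff_e_congr (by omega) (by omega) s
  refine ⟨key1, fun i => ?_⟩
  match i with
  | 0 =>
    rw [pow_zero, one_mul, ← nuY_zero_eq]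
    exact key1 0
  | (i+1) =>
    by_cases hi : i + 1 ≤ l
    · have := hY (l - (i+1))
      rw [nuY] at this
      have e1 : nu ht (fun k => coeff (e k (l - (i+1) + k)) (s * X 1 ^ l))
          = t ^ (i+1) * nuX ht (i+1) s := by
        rw [nuX]
        rw [← nu_shift ht (fun k => coeff (e ((i+1) + k) k) s) (i+1)]
        refine nu_congr ht fun k => ?_
        rw [coeff_mul_Ypow]
        by_cases hk : i + 1 ≤ k
        · rw [if_pos (by omega), if_pos hk]
          exact coeff_e_congr (by omega) (by omega) _
        · rw [if_neg (by omega), if_neg hk]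
      rw [e1] at this
      exact this
    · have := hX (i + 1 - l)
      rw [nuX] at this
      have e1 : nu ht (fun k => coeff (e ((i + 1 - l) + k) k) (s * X 1 ^ l))
          = t ^ l * nuX ht (i+1) s := by
        rw [nuX]
        rw [← nu_shift ht (fun k => coeff (e ((i+1) + k) k) s) l]
        refine nu_congr ht fun k => ?_
        rw [coeff_mul_Ypow]
        by_cases hk : l ≤ k
        · rw [if_pos hk, if_pos hk]
          exact coeff_e_congr (by omega) (by omega) _
        · rw [if_neg hk, if_neg hk]
      rw [e1] at this
      calc t ^ (i+1) * nuX ht (i+1) s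
          = t ^ (i + 1 - l) * (t ^ l * nuX ht (i+1) s) := by
            rw [← mul_assoc, ← pow_add]
            congr 2
            omega
        _ = 0 := by rw [this, mul_zero]

lemma coeff_pureY_e (g : ℕ → A) (i j : ℕ) :
    coeff (e i j) (pureY g) = if i = 0 then g j else 0 := by
  rw [coeff_pureY, e_apply0, e_apply1]

lemma coeff_pureX_e (h : ℕ → A) (i j : ℕ) :
    coeff (e i j) (pureX h) = if j = 0 then h i else 0 := by
  rw [coeff_pureX, e_apply0, e_apply1]

lemma nuX_pureY (ht : t ∈ maximalIdeal A) (g : ℕ → A) (hg : g 0 = 0) (i : ℕ) :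
    nuX ht i (pureY g) = 0 := by
  rw [nuX, ← nu_zero ht]
  refine nu_congr ht fun k => ?_
  rw [coeff_pureY_e]
  by_cases h : i + k = 0
  · rw [if_pos h]
    have : k = 0 := by omega
    rw [this, hg]
  · rw [if_neg h]

lemma nuY_pureY (ht : t ∈ maximalIdeal A) (g : ℕ → A) (j : ℕ) :
    nuY ht j (pureY g) = g j := by
  rw [nuY, ← nu_delta ht (g j)]
  refine nu_congr ht fun k => ?_
  rw [coeff_pureY_e]
  by_cases h : k = 0
  · rw [if_pos h, if_pos h, h, add_zero]
  · rw [if_neg h, if_neg h]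

lemma nuY_pureX (ht : t ∈ maximalIdeal A) (h : ℕ → A) (hh : h 0 = 0) (j : ℕ) :
    nuY ht j (pureX h) = 0 := by
  rw [nuY, ← nu_zero ht]
  refine nu_congr ht fun k => ?_
  rw [coeff_pureX_e]
  by_cases hc : j + k = 0
  · rw [if_pos hc]
    have : k = 0 := by omega
    rw [this, hh]
  · rw [if_neg hc]

lemma nuX_pureX (ht : t ∈ maximalIdeal A) (h : ℕ → A) (i : ℕ) :
    nuX ht i (pureX h) = h i := by
  rw [nuX, ← nu_delta ht (h i)]
  refine nu_congr ht fun k => ?_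
  rw [coeff_pureX_e]
  by_cases hc : k = 0
  · rw [if_pos hc, if_pos hc, hc, add_zero]
  · rw [if_neg hc, if_neg hc]

lemma nuX_sub (ht : t ∈ maximalIdeal A) (F G : MvPowerSeries (Fin 2) A) (i : ℕ) :
    nuX ht i (F - G) = nuX ht i F - nuX ht i G := by
  rw [nuX, nuX, nuX, ← nu_sub ht]
  exact nu_congr ht fun k => map_sub _ _ _

lemma nuY_sub (ht : t ∈ maximalIdeal A) (F G : MvPowerSeries (Fin 2) A) (j : ℕ) :
    nuY ht j (F - G) = nuY ht j F - nuY ht j G := by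
  rw [nuY, nuY, nuY, ← nu_sub ht]
  exact nu_congr ht fun k => map_sub _ _ _

noncomputable def Qc (ht : t ∈ maximalIdeal A) (F : MvPowerSeries (Fin 2) A) :
    MvPowerSeries (Fin 2) A :=
  fun d => nu ht (fun k => coeff (e (d 0 + 1 + k) (d 1 + 1 + k)) F)

lemma coeff_Qc (ht : t ∈ maximalIdeal A) (F : MvPowerSeries (Fin 2) A) (i j : ℕ) :
    coeff (e i j) (Qc ht F) = nu ht (fun k => coeff (e (i + 1 + k) (j + 1 + k)) F) := by
  simp only [Qc, coeff_apply, e_apply0, e_apply1]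

lemma S_succ' (t : A) (f : ℕ → A) (n : ℕ) :
    S t f (n + 1) = f 0 + t * S t (fun k => f (k + 1)) n := by
  rw [S, Finset.sum_range_succ', pow_zero, one_mul, S, Finset.mul_sum, add_comm]
  congr 1
  refine Finset.sum_congr rfl fun k _ => ?_
  ring

lemma mem_of_nu (ht : t ∈ maximalIdeal A) (F : MvPowerSeries (Fin 2) A)
    (hX : ∀ i, nuX ht i F = 0) (hY : ∀ j, nuY ht j F = 0) :
    ∃ q, F = P t * q := by
  refine ⟨Qc ht F, ?_⟩
  have main : ∀ i j : ℕ, coeff (e i j) F = coeff (e i j) (P t * Qc ht F) := by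
    intro i j
    rw [coeff_P_mul]
    match i, j with
    | i, 0 =>
      rw [if_neg (by omega)]
      have hQ2 : coeff (e i 0) (Qc ht F)
          = nu ht (fun k => coeff (e (i + 1 + k) (k + 1)) F) := by
        rw [coeff_Qc]
        exact nu_congr ht fun k => coeff_e_congr rfl (by omega) F
      have hx : coeff (e i 0) F + t * coeff (e i 0) (Qc ht F) = 0 := by
        refine haus fun n => ?_
        have h1 : S t (fun k => coeff (e (i + k) k) F) (n + 1) ∈ (maximalIdeal A) ^ (n + 1) := by
          have := nu_spec ht (fun k => coeff (e (i + k) k) F) (n + 1)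
          have h0 : nu ht (fun k => coeff (e (i + k) k) F) = 0 := hX i
          rwa [h0, sub_zero] at this
        have h2 : t * (coeff (e i 0) (Qc ht F)
            - S t (fun k => coeff (e (i + 1 + k) (k + 1)) F) n) ∈ (maximalIdeal A) ^ (n + 1) := by
          rw [pow_succ, mul_comm ((maximalIdeal A)^n)]
          refine Ideal.mul_mem_mul ht ?_
          rw [hQ2, ← neg_sub]
          exact Submodule.neg_mem _ (nu_spec ht _ n)
        have h3 : S t (fun k => coeff (e (i + k) k) F) (n + 1)
            = coeff (e i 0) F + t * S t (fun k => coeff (e (i + 1 + k) (k + 1)) F) n := by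
          simp only [S_succ']
          congr 2
          refine congrArg (fun f => S t f n) (funext fun k => ?_)
          exact coeff_e_congr (by omega) rfl F
        have hval : coeff (e i 0) F + t * coeff (e i 0) (Qc ht F)
            = S t (fun k => coeff (e (i + k) k) F) (n + 1)
              + t * (coeff (e i 0) (Qc ht F)
                - S t (fun k => coeff (e (i + 1 + k) (k + 1)) F) n) := by
          rw [h3]; ring
        rw [hval]
        exact Ideal.pow_le_pow_right (Nat.le_succ n) (Submodule.add_mem _ h1 h2)
      linear_combination hx
    | 0, (j+1) =>
      rw [if_neg (by omega)]
      have hQ2 : coeff (e 0 (j+1)) (Qc ht F)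
          = nu ht (fun k => coeff (e (k + 1) (j + 2 + k)) F) := by
        rw [coeff_Qc]
        exact nu_congr ht fun k => coeff_e_congr (by omega) (by omega) F
      have hx : coeff (e 0 (j+1)) F + t * coeff (e 0 (j+1)) (Qc ht F) = 0 := by
        refine haus fun n => ?_
        have h1 : S t (fun k => coeff (e k ((j+1) + k)) F) (n + 1) ∈ (maximalIdeal A) ^ (n + 1) := by
          have := nu_spec ht (fun k => coeff (e k ((j+1) + k)) F) (n + 1)
          have h0 : nu ht (fun k => coeff (e k ((j+1) + k)) F) = 0 := hY (j+1)
          rwa [h0, sub_zero] at this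
        have h2 : t * (coeff (e 0 (j+1)) (Qc ht F)
            - S t (fun k => coeff (e (k + 1) (j + 2 + k)) F) n) ∈ (maximalIdeal A) ^ (n + 1) := by
          rw [pow_succ, mul_comm ((maximalIdeal A)^n)]
          refine Ideal.mul_mem_mul ht ?_
          rw [hQ2, ← neg_sub]
          exact Submodule.neg_mem _ (nu_spec ht _ n)
        have h3 : S t (fun k => coeff (e k ((j+1) + k)) F) (n + 1)
            = coeff (e 0 (j+1)) F + t * S t (fun k => coeff (e (k + 1) (j + 2 + k)) F) n := by
          simp only [S_succ']
          congr 2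
          refine congrArg (fun f => S t f n) (funext fun k => ?_)
          exact coeff_e_congr rfl (by omega) F
        have hval : coeff (e 0 (j+1)) F + t * coeff (e 0 (j+1)) (Qc ht F)
            = S t (fun k => coeff (e k ((j+1) + k)) F) (n + 1)
              + t * (coeff (e 0 (j+1)) (Qc ht F)
                - S t (fun k => coeff (e (k + 1) (j + 2 + k)) F) n) := by
          rw [h3]; ring
        rw [hval]
        exact Ideal.pow_le_pow_right (Nat.le_succ n) (Submodule.add_mem _ h1 h2)
      linear_combination hx
    | (i+1), (j+1) =>
      rw [if_pos (by omega)]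
      have ei : i + 1 - 1 = i := by omega
      have ej : j + 1 - 1 = j := by omega
      rw [ei, ej]
      have hQ1 : coeff (e i j) (Qc ht F)
          = nu ht (fun k => coeff (e (i + 1 + k) (j + 1 + k)) F) := coeff_Qc ht F i j
      have hQ2 : coeff (e (i+1) (j+1)) (Qc ht F)
          = nu ht (fun k => coeff (e (i + 2 + k) (j + 2 + k)) F) := by
        rw [coeff_Qc]
      have hx : coeff (e i j) (Qc ht F) - t * coeff (e (i+1) (j+1)) (Qc ht F)
          - coeff (e (i+1) (j+1)) F = 0 := by
        refine haus fun n => ?_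
        have h1 : S t (fun k => coeff (e (i + 1 + k) (j + 1 + k)) F) (n + 1)
            - coeff (e i j) (Qc ht F) ∈ (maximalIdeal A) ^ (n + 1) := by
          rw [hQ1]
          exact nu_spec ht _ (n + 1)
        have h2 : t * (coeff (e (i+1) (j+1)) (Qc ht F)
            - S t (fun k => coeff (e (i + 2 + k) (j + 2 + k)) F) n)
            ∈ (maximalIdeal A) ^ (n + 1) := by
          rw [pow_succ, mul_comm ((maximalIdeal A)^n)]
          refine Ideal.mul_mem_mul ht ?_
          rw [hQ2, ← neg_sub]
          exact Submodule.neg_mem _ (nu_spec ht _ n)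
        have h3 : S t (fun k => coeff (e (i + 1 + k) (j + 1 + k)) F) (n + 1)
            = coeff (e (i+1) (j+1)) F
              + t * S t (fun k => coeff (e (i + 2 + k) (j + 2 + k)) F) n := by
          simp only [S_succ']
          congr 2
          refine congrArg (fun f => S t f n) (funext fun k => ?_)
          exact coeff_e_congr (by omega) (by omega) F
        have hval : coeff (e i j) (Qc ht F) - t * coeff (e (i+1) (j+1)) (Qc ht F)
            - coeff (e (i+1) (j+1)) F
            = -(S t (fun k => coeff (e (i + 1 + k) (j + 1 + k)) F) (n + 1)
                - coeff (e i j) (Qc ht F))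
              - t * (coeff (e (i+1) (j+1)) (Qc ht F)
                - S t (fun k => coeff (e (i + 2 + k) (j + 2 + k)) F) n)
              + (S t (fun k => coeff (e (i + 1 + k) (j + 1 + k)) F) (n + 1)
                - coeff (e (i+1) (j+1)) F
                - t * S t (fun k => coeff (e (i + 2 + k) (j + 2 + k)) F) n) := by
          ring
        rw [hval]
        refine Ideal.pow_le_pow_right (Nat.le_succ n) ?_
        refine Submodule.add_mem _ (Submodule.sub_mem _ (Submodule.neg_mem _ h1) h2) ?_
        have : S t (fun k => coeff (e (i + 1 + k) (j + 1 + k)) F) (n + 1)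
            - coeff (e (i+1) (j+1)) F
            - t * S t (fun k => coeff (e (i + 2 + k) (j + 2 + k)) F) n = 0 := by
          rw [h3]; ring
        rw [this]
        exact Submodule.zero_mem _
      linear_combination -hx
  ext d
  rw [eq_e d]
  exact main (d 0) (d 1)

lemma sub_pureY (ht : t ∈ maximalIdeal A) (r : MvPowerSeries (Fin 2) A)
    (hX : ∀ i, nuX ht i r = 0) :
    ∃ q, r - pureY (fun j => nuY ht j r) = P t * q := by
  have hg0 : nuY ht 0 r = 0 := by rw [nuY_zero_eq]; exact hX 0
  refine mem_of_nu ht _ (fun i => ?_) (fun j => ?_)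
  · rw [nuX_sub, hX i, nuX_pureY ht _ hg0 i, sub_zero]
  · rw [nuY_sub, nuY_pureY, sub_self]

lemma sub_pureX (ht : t ∈ maximalIdeal A) (s : MvPowerSeries (Fin 2) A)
    (hY : ∀ j, nuY ht j s = 0) :
    ∃ q, s - pureX (fun i => nuX ht i s) = P t * q := by
  have hh0 : nuX ht 0 s = 0 := by rw [← nuY_zero_eq]; exact hY 0
  refine mem_of_nu ht _ (fun i => ?_) (fun j => ?_)
  · rw [nuX_sub, nuX_pureX, sub_self]
  · rw [nuY_sub, hY j, nuY_pureX ht _ hh0 j, sub_zero]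

lemma pure_vanish (ht : t ∈ maximalIdeal A) (g h : ℕ → A) (q : MvPowerSeries (Fin 2) A)
    (c : A) (hg0 : g 0 = 0) (hh0 : h 0 = 0)
    (hgt : ∀ j, t ^ j * g j = 0) (hht : ∀ i, t ^ i * h i = 0)
    (hF : pureY g + pureX h + pureY g * pureX h - C c = P t * q) :
    (∀ j, g j = 0) ∧ (∀ i, h i = 0) := by
  classical
  have rel : ∀ i j : ℕ,
      (if i = 0 then g j else 0) + (if j = 0 then h i else 0) + g j * h i
        - (if i = 0 ∧ j = 0 then c else 0)
      = (if 1 ≤ i ∧ 1 ≤ j then coeff (e (i-1) (j-1)) q else 0)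
        - t * coeff (e i j) q := by
    intro i j
    have hc := congrArg (coeff (e i j)) hF
    rw [map_sub, map_add, map_add, coeff_pureY_e, coeff_pureX_e,
      coeff_pureY_mul_pureX, coeff_P_mul] at hc
    rw [e_apply0, e_apply1] at hc
    have hcc : coeff (e i j) (C c) = if i = 0 ∧ j = 0 then c else 0 := by
      rw [MvPowerSeries.coeff_C]
      simp only [e_eq_zero_iff]
    rw [hcc] at hc
    exact hc
  have relα : ∀ n : ℕ, g (n+1) = -(t * coeff (e 0 (n+1)) q) := by
    intro n
    have hr := rel 0 (n+1)
    rw [if_pos rfl, if_neg (by omega : ¬ (n+1 = 0)),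
      if_neg (by omega : ¬ ((0:ℕ) = 0 ∧ n+1 = 0)),
      if_neg (by omega : ¬ (1 ≤ (0:ℕ) ∧ 1 ≤ n+1)), hh0] at hr
    linear_combination hr
  have relγ : ∀ m : ℕ, h (m+1) = -(t * coeff (e (m+1) 0) q) := by
    intro m
    have hr := rel (m+1) 0
    rw [if_pos rfl, if_neg (by omega : ¬ (m+1 = 0)),
      if_neg (by omega : ¬ (m+1 = 0 ∧ (0:ℕ) = 0)),
      if_neg (by omega : ¬ (1 ≤ m+1 ∧ 1 ≤ (0:ℕ))), hg0] at hr
    linear_combination hr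
  have relβ : ∀ m n : ℕ, g (n+1) * h (m+1)
      = coeff (e m n) q - t * coeff (e (m+1) (n+1)) q := by
    intro m n
    have hr := rel (m+1) (n+1)
    rw [if_neg (by omega : ¬ (m+1 = 0)), if_neg (by omega : ¬ (n+1 = 0)),
      if_neg (by omega : ¬ (m+1 = 0 ∧ n+1 = 0)),
      if_pos (by omega : 1 ≤ m+1 ∧ 1 ≤ n+1), Nat.add_sub_cancel, Nat.add_sub_cancel] at hr
    linear_combination hr
  have gclaim : ∀ n k : ℕ, g (n+1) = -(t^(k+1) * coeff (e k (n+1+k)) q) := by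
    intro n k
    induction k with
    | zero =>
      rw [pow_succ, pow_zero, one_mul]
      exact relα n
    | succ k ih =>
      have hb := relβ k (n+1+k)
      have hkill : t^(k+1) * h (k+1) = 0 := hht (k+1)
      show g (n+1) = -(t^(k+2) * coeff (e (k+1) (n+1+k+1)) q)
      linear_combination ih + t^(k+1) * hb - g (n+1+k+1) * hkill
  have hclaim : ∀ m k : ℕ, h (m+1) = -(t^(k+1) * coeff (e (m+1+k) k) q) := by
    intro m k
    induction k with
    | zero =>
      rw [pow_succ, pow_zero, one_mul]
      exact relγ m
    | succ k ih =>
      have hb := relβ (m+1+k) k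
      have hkill : t^(k+1) * g (k+1) = 0 := hgt (k+1)
      show h (m+1) = -(t^(k+2) * coeff (e (m+1+k+1) (k+1)) q)
      linear_combination ih + t^(k+1) * hb - h (m+1+k+1) * hkill
  constructor
  · intro j
    match j with
    | 0 => exact hg0
    | (n+1) =>
      refine haus fun m => ?_
      match m with
      | 0 => simp
      | (k+1) =>
        rw [gclaim n k]
        exact Submodule.neg_mem _ (Ideal.mul_mem_right _ _ (Ideal.pow_mem_pow ht (k+1)))
  · intro i
    match i with
    | 0 => exact hh0
    | (m+1) =>
      refine haus fun m' => ?_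
      match m' with
      | 0 => simp
      | (k+1) =>
        rw [hclaim m k]
        exact Submodule.neg_mem _ (Ideal.mul_mem_right _ _ (Ideal.pow_mem_pow ht (k+1)))

lemma memI {t : A} (I : Ideal (MvPowerSeries (Fin 2) A))
    (hI : I = Ideal.span {MvPowerSeries.X (0 : Fin 2) * MvPowerSeries.X (1 : Fin 2) -
      (MvPowerSeries.C : A →+* MvPowerSeries (Fin 2) A) t}) (x : MvPowerSeries (Fin 2) A) :
    x ∈ I ↔ ∃ q, x = P t * q := by
  rw [hI, Ideal.mem_span_singleton, dvd_def]
  exact Iff.rfl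

end Stmt3Aux


open Stmt3Aux in


/-- **Lemma 3.3(2), completed version.**  Let `A` be a complete noetherian local ring,
`t ∈ m_A`, and `R = A⟦X,Y⟧/(XY − t)`, with `u, v` the images of `X, Y`.  If `l ≥ 1`
and `a, b ∈ Rˣ` satisfy `a·u^l = u^l`, `b·v^l = v^l`, and `a·b` is the image of a
unit of `A`, then `a = b = 1`. -/
theorem stmt3 {A : Type*} [CommRing A] [IsNoetherianRing A] [IsLocalRing A]
    [IsAdicComplete (IsLocalRing.maximalIdeal A) A]
    (t : A) (ht : t ∈ IsLocalRing.maximalIdeal A)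
    (I : Ideal (MvPowerSeries (Fin 2) A))
    (hI : I = Ideal.span {MvPowerSeries.X (0 : Fin 2) * MvPowerSeries.X (1 : Fin 2) -
      (MvPowerSeries.C : A →+* MvPowerSeries (Fin 2) A) t})
    (φ : A →+* MvPowerSeries (Fin 2) A ⧸ I)
    (hφ : φ = (Ideal.Quotient.mk I).comp ((MvPowerSeries.C : A →+* MvPowerSeries (Fin 2) A)))
    (u v : MvPowerSeries (Fin 2) A ⧸ I)
    (hu : u = Ideal.Quotient.mk I (MvPowerSeries.X (0 : Fin 2)))
    (hv : v = Ideal.Quotient.mk I (MvPowerSeries.X (1 : Fin 2)))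
    (l : ℕ) (hl : 1 ≤ l)
    (a b : (MvPowerSeries (Fin 2) A ⧸ I)ˣ)
    (ha : (a : MvPowerSeries (Fin 2) A ⧸ I) * u ^ l = u ^ l)
    (hb : (b : MvPowerSeries (Fin 2) A ⧸ I) * v ^ l = v ^ l)
    (hab : ∃ w : Aˣ, (a : MvPowerSeries (Fin 2) A ⧸ I) * b = φ (w : A)) :
    (a : MvPowerSeries (Fin 2) A ⧸ I) = 1 ∧ (b : MvPowerSeries (Fin 2) A ⧸ I) = 1 := by
  obtain ⟨w, hw⟩ := hab
  obtain ⟨a', ha'⟩ := Ideal.Quotient.mk_surjective (a : MvPowerSeries (Fin 2) A ⧸ I)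
  obtain ⟨b', hb'⟩ := Ideal.Quotient.mk_surjective (b : MvPowerSeries (Fin 2) A ⧸ I)
  have hra : ((a' - 1) * MvPowerSeries.X (0 : Fin 2) ^ l : MvPowerSeries (Fin 2) A) ∈ I := by
    rw [← Ideal.Quotient.eq_zero_iff_mem, map_mul, map_sub, map_one, map_pow, ha', ← hu,
      sub_mul, one_mul, ha, sub_self]
  have hsb : ((b' - 1) * MvPowerSeries.X (1 : Fin 2) ^ l : MvPowerSeries (Fin 2) A) ∈ I := by
    rw [← Ideal.Quotient.eq_zero_iff_mem, map_mul, map_sub, map_one, map_pow, hb', ← hv,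
      sub_mul, one_mul, hb, sub_self]
  have hm3 : (a' * b' - MvPowerSeries.C (w : A) : MvPowerSeries (Fin 2) A) ∈ I := by
    rw [← Ideal.Quotient.eq_zero_iff_mem, map_sub, map_mul, ha', hb', hw, hφ,
      RingHom.comp_apply, sub_self]
  obtain ⟨q₁, hq₁⟩ := (memI I hI _).mp hra
  obtain ⟨q₂, hq₂⟩ := (memI I hI _).mp hsb
  obtain ⟨q₃, hq₃⟩ := (memI I hI _).mp hm3
  obtain ⟨hXr, hYr⟩ := extractY ht (a' - 1) q₁ l hl hq₁
  obtain ⟨hYs, hXs⟩ := extractX ht (b' - 1) q₂ l hl hq₂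
  obtain ⟨qr, hqr⟩ := sub_pureY ht (a' - 1) hXr
  obtain ⟨qs, hqs⟩ := sub_pureX ht (b' - 1) hYs
  have key : pureY (fun j => nuY ht j (a' - 1)) + pureX (fun i => nuX ht i (b' - 1))
      + pureY (fun j => nuY ht j (a' - 1)) * pureX (fun i => nuX ht i (b' - 1))
      - MvPowerSeries.C ((w : A) - 1)
      = P t * (q₃ - qr - qs - (a' - 1) * qs - pureX (fun i => nuX ht i (b' - 1)) * qr) := by
    rw [map_sub, map_one]
    linear_combination hq₃ - hqr - hqs - (a' - 1) * hqs
      - pureX (fun i => nuX ht i (b' - 1)) * hqr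
  have hg0 : nuY ht 0 (a' - 1) = 0 := by rw [nuY_zero_eq]; exact hXr 0
  have hh0 : nuX ht 0 (b' - 1) = 0 := by rw [← nuY_zero_eq]; exact hYs 0
  obtain ⟨hgz, hhz⟩ := pure_vanish ht _ _ _ _ hg0 hh0 hYr hXs key
  have hGzero : pureY (fun j => nuY ht j (a' - 1)) = 0 := by
    ext d
    rw [coeff_pureY]
    simp [hgz (d 1)]
  have hHzero : pureX (fun i => nuX ht i (b' - 1)) = 0 := by
    ext d
    rw [coeff_pureX]
    simp [hhz (d 0)]
  have hrI : (a' - 1 : MvPowerSeries (Fin 2) A) ∈ I := by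
    rw [memI I hI]
    exact ⟨qr, by rw [← hqr, hGzero, sub_zero]⟩
  have hsI : (b' - 1 : MvPowerSeries (Fin 2) A) ∈ I := by
    rw [memI I hI]
    exact ⟨qs, by rw [← hqs, hHzero, sub_zero]⟩
  constructor
  · have h1 : (a : MvPowerSeries (Fin 2) A ⧸ I) - 1 = 0 := by
      rw [← ha', ← map_one (Ideal.Quotient.mk I), ← map_sub, Ideal.Quotient.eq_zero_iff_mem]
      exact hrI
    exact sub_eq_zero.mp h1
  · have h1 : (b : MvPowerSeries (Fin 2) A ⧸ I) - 1 = 0 := by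
      rw [← hb', ← map_one (Ideal.Quotient.mk I), ← map_sub, Ideal.Quotient.eq_zero_iff_mem]
      exact hsI
    exact sub_eq_zero.mp h1
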